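/- arXiv:1304.5831 — 2 statements merged into one kernel-verified Lean document; each statement's English description precedes it below -/
import Mathlib

section
/- Let (f,g) ∈ 𝒜 satisfy the single overlapping property (So). If p ∈ F₁\W belongs to the orbit O₊(0) of 0 (in particular p ≠ f(1), so 𝓕(p) is defined), then 𝓕(p) ∈ O₊(0). Symmetrically, if p ∈ G₁\W belongs to O₊(1), then 𝓖(p) ∈ O₊(1). -/
open Set Function MeasureTheory

noncomputable section

namespace IFSPaper

/-- The closed unit interval `I = [0,1]` as a subset of `ℝ`. -/
def unitI : Set ℝ := Set.Icc 0 1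

/-- Membership in the class `𝒜`: `f, g : I → I` are `C¹` diffeomorphisms onto their
images with `f 0 = 0`, `g 1 = 1`, `f x < x < g x` on `(0,1)` and `0 < g 0 < f 1 < 1`. -/
structure MemA (f g : ℝ → ℝ) : Prop where
  f_maps : Set.MapsTo f unitI unitI
  g_maps : Set.MapsTo g unitI unitI
  f_c1 : ContDiff ℝ 1 f
  g_c1 : ContDiff ℝ 1 g
  f_inj : Set.InjOn f unitI
  g_inj : Set.InjOn g unitI
  f_deriv_ne : ∀ x ∈ unitI, deriv f x ≠ 0
  g_deriv_ne : ∀ x ∈ unitI, deriv g x ≠ 0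
  f_zero : f 0 = 0
  g_one : g 1 = 1
  f_lt_id : ∀ x ∈ Set.Ioo (0:ℝ) 1, f x < x
  id_lt_g : ∀ x ∈ Set.Ioo (0:ℝ) 1, x < g x
  g0_pos : 0 < g 0
  g0_lt_f1 : g 0 < f 1
  f1_lt_one : f 1 < 1

/-- The element of the semigroup `⟨f,g⟩₊` associated to a word in the two generators
(`true ↦ f`, `false ↦ g`). -/
def word (f g : ℝ → ℝ) : List Bool → ℝ → ℝ
  | [] => id
  | b :: t => (if b then f else g) ∘ word f g t

/-- The semigroup orbit `O₊(x) = {φ x : φ ∈ ⟨f,g⟩₊}` of a point `x`. -/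
def orbitP (f g : ℝ → ℝ) (x : ℝ) : Set ℝ :=
  {y | ∃ w : List Bool, w ≠ [] ∧ word f g w x = y}

/-- `K` is a minimal set for the action of `⟨f,g⟩₊` on `I`. -/
def IsMinimalSet (f g : ℝ → ℝ) (K : Set ℝ) : Prop :=
  K.Nonempty ∧ K ⊆ unitI ∧ ∀ x ∈ K, closure (orbitP f g x) = K

/-- The overlapping region `W = [g 0, f 1]`. -/
def ovW (f g : ℝ → ℝ) : Set ℝ := Set.Icc (g 0) (f 1)

/-- The fundamental domain `Fₙ = [f^[n+1] 1, f^[n] 1]`. -/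
def Fint (f : ℝ → ℝ) (n : ℕ) : Set ℝ := Set.Icc (f^[n+1] 1) (f^[n] 1)

/-- The fundamental domain `Gₙ = [g^[n] 0, g^[n+1] 0]`. -/
def Gint (g : ℝ → ℝ) (n : ℕ) : Set ℝ := Set.Icc (g^[n] 0) (g^[n+1] 0)

/-- Single overlapping property `So`: `f² 1 < g 0` and `f 1 < g² 0`. -/
def So (f g : ℝ → ℝ) : Prop := f (f 1) < g 0 ∧ f 1 < g (g 0)

/-- A (nonempty) closed bounded interval. -/
def IsClosedInterval (A : Set ℝ) : Prop := ∃ a b : ℝ, a ≤ b ∧ A = Set.Icc a b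

/-- A closed bounded interval with nonempty interior. -/
def IsNondegClosedInterval (A : Set ℝ) : Prop := ∃ a b : ℝ, a < b ∧ A = Set.Icc a b

/-- A nonempty open bounded interval. -/
def IsOpenInterval (J : Set ℝ) : Prop := ∃ a b : ℝ, a < b ∧ J = Set.Ioo a b

/-- Hole property `Ho` witnessed by the pair of holes `(Hf, Hg)`. -/
def HoleAt (f g : ℝ → ℝ) (Hf Hg : Set ℝ) : Prop :=
  IsNondegClosedInterval Hf ∧ IsNondegClosedInterval Hg ∧
  Hf ⊆ interior (Fint f 1 \ ovW f g) ∧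
  Hg ⊆ interior (Gint g 1 \ ovW f g) ∧
  g '' Hf = Hg ∧ f '' Hg = Hf

/-- Hole property `Ho`. -/
def Ho (f g : ℝ → ℝ) : Prop := ∃ Hf Hg : Set ℝ, HoleAt f g Hf Hg

/-- The induced (first-return) map `𝓕 : F₁ \ {f 1} → G₁`,
`𝓕 x = g^[-n x] (f⁻¹ x)` where `n x` is least with `g^[-n x] (f⁻¹ x) ∈ G₁`. -/
def calF (f g : ℝ → ℝ) (x : ℝ) : ℝ :=
  (Function.invFunOn g unitI)^[sInf {n : ℕ |
      (Function.invFunOn g unitI)^[n] (Function.invFunOn f unitI x) ∈ Gint g 1}]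
    (Function.invFunOn f unitI x)

/-- The induced (first-return) map `𝓖 : G₁ \ {g 0} → F₁`. -/
def calG (f g : ℝ → ℝ) (x : ℝ) : ℝ :=
  (Function.invFunOn f unitI)^[sInf {n : ℕ |
      (Function.invFunOn f unitI)^[n] (Function.invFunOn g unitI x) ∈ Fint f 1}]
    (Function.invFunOn g unitI x)

/-- Eventual expansion property `Ee`: `𝓕` is uniformly expanding outside `Hf`
and `𝓖` outside `Hg` (at all points where the derivative makes sense). -/
def Ee (f g : ℝ → ℝ) (Hf Hg : Set ℝ) : Prop :=
  ∃ μ : ℝ, 1 < μ ∧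
    (∀ y ∈ Fint f 1 \ Hf, DifferentiableAt ℝ (calF f g) y → μ < deriv (calF f g) y) ∧
    (∀ y ∈ Gint g 1 \ Hg, DifferentiableAt ℝ (calG f g) y → μ < deriv (calG f g) y)

/-- The ruination region `R_f = 𝓕⁻¹(Hg) ⊆ F₁`. -/
def Rf (f g : ℝ → ℝ) (Hg : Set ℝ) : Set ℝ :=
  {x | x ∈ Fint f 1 \ {f 1} ∧ calF f g x ∈ Hg}

/-- The ruination region `R_g = 𝓖⁻¹(Hf) ⊆ G₁`. -/
def Rg (f g : ℝ → ℝ) (Hf : Set ℝ) : Set ℝ :=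
  {x | x ∈ Gint g 1 \ {g 0} ∧ calG f g x ∈ Hf}

/-- Castration property `Ca`: `W ⊆ int R_f ∪ int R_g`. -/
def Ca (f g : ℝ → ℝ) (Hf Hg : Set ℝ) : Prop :=
  ovW f g ⊆ interior (Rf f g Hg) ∪ interior (Rg f g Hf)

/-- Membership in the class `𝒞` with the given holes `(Hf, Hg)`:
`(f,g) ∈ 𝒜` together with `So`, `Ho`, `Ee` and `Ca`. -/
def MemC (f g : ℝ → ℝ) (Hf Hg : Set ℝ) : Prop :=
  MemA f g ∧ So f g ∧ HoleAt f g Hf Hg ∧ Ee f g Hf Hg ∧ Ca f g Hf Hg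

/-- The interval `I₋₁ = [0, 1/3 - ε]` of the appendix example. -/
def Im1 (ε : ℝ) : Set ℝ := Set.Icc 0 (1/3 - ε)

/-- The interval `I₀ = [1/3 + ε, 2/3 - ε]` of the appendix example. -/
def Iz (ε : ℝ) : Set ℝ := Set.Icc (1/3 + ε) (2/3 - ε)

/-- The interval `I₁ = [2/3 + ε, 1]` of the appendix example. -/
def Ip1 (ε : ℝ) : Set ℝ := Set.Icc (2/3 + ε) 1

/-- The inclusion property of the appendix example. -/
def InclusionProp (f g : ℝ → ℝ) (ε : ℝ) : Prop :=
  f '' Im1 ε ⊆ Im1 ε ∧ f '' Iz ε ⊆ interior (Im1 ε) ∧ f '' Ip1 ε ⊆ interior (Iz ε) ∧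
  g '' Ip1 ε ⊆ Ip1 ε ∧ g '' Iz ε ⊆ interior (Ip1 ε) ∧ g '' Im1 ε ⊆ interior (Iz ε)

/-- The strong uniform contraction property of the appendix example. -/
def StrongContraction (f g : ℝ → ℝ) (ε lam : ℝ) : Prop :=
  ∀ x ∈ Im1 ε ∪ Iz ε ∪ Ip1 ε, deriv f x < lam ∧ deriv g x < lam

section Aux

variable {f g : ℝ → ℝ}

lemma mem0 : (0:ℝ) ∈ unitI := ⟨le_refl 0, zero_le_one⟩
lemma mem1 : (1:ℝ) ∈ unitI := ⟨zero_le_one, le_refl 1⟩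

lemma MemA.f_mono (hA : MemA f g) : StrictMonoOn f unitI := by
  have h : f 0 ≤ f 1 := by
    rw [hA.f_zero]; exact (hA.g0_pos.trans hA.g0_lt_f1).le
  exact ContinuousOn.strictMonoOn_of_injOn_Icc zero_le_one h
    hA.f_c1.continuous.continuousOn hA.f_inj

lemma MemA.g_mono (hA : MemA f g) : StrictMonoOn g unitI := by
  have h : g 0 ≤ g 1 := by
    rw [hA.g_one]; exact (hA.g0_lt_f1.trans hA.f1_lt_one).le
  exact ContinuousOn.strictMonoOn_of_injOn_Icc zero_le_one h
    hA.g_c1.continuous.continuousOn hA.g_inj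

lemma word_maps (hA : MemA f g) : ∀ (w : List Bool) (x : ℝ), x ∈ unitI →
    word f g w x ∈ unitI
  | [], _, hx => hx
  | b :: t, x, hx => by
    have h := word_maps hA t x hx
    cases b
    · exact hA.g_maps h
    · exact hA.f_maps h

lemma MemA.invf_f (hA : MemA f g) {z : ℝ} (hz : z ∈ unitI) :
    Function.invFunOn f unitI (f z) = z :=
  hA.f_inj.leftInvOn_invFunOn hz

lemma MemA.invg_g (hA : MemA f g) {z : ℝ} (hz : z ∈ unitI) :
    Function.invFunOn g unitI (g z) = z :=
  hA.g_inj.leftInvOn_invFunOn hz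

lemma iter_two (h : ℝ → ℝ) (x : ℝ) : h^[2] x = h (h x) := by
  rw [show (2:ℕ) = 1 + 1 from rfl, Function.iterate_succ_apply', Function.iterate_one]

/-- Peeling lemma on the `g` side: if `y` lies in the orbit of `0` and `g 0 ≤ y`, then
repeatedly applying `g⁻¹` until landing in `G₁` stays in the orbit of `0`. -/
lemma peel_g (hA : MemA f g) (hSo : So f g) :
    ∀ w : List Bool, w ≠ [] → ∀ y : ℝ, word f g w 0 = y → g 0 ≤ y →
      (Function.invFunOn g unitI)^[sInf {n : ℕ |
          (Function.invFunOn g unitI)^[n] y ∈ Gint g 1}] y ∈ orbitP f g 0 := by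
  intro w
  induction w with
  | nil => intro h; exact absurd rfl h
  | cons b t ih =>
    intro _ y hy hgy
    set invg := Function.invFunOn g unitI with hinvg
    have hzI : word f g t 0 ∈ unitI := word_maps hA t 0 mem0
    have hyI : y ∈ unitI := by rw [← hy]; exact word_maps hA (b :: t) 0 mem0
    have hg0I : g 0 ∈ unitI := hA.g_maps mem0
    have hgg0I : g (g 0) ∈ unitI := hA.g_maps hg0I
    have hG1 : Gint g 1 = Set.Icc (g 0) (g (g 0)) := by
      unfold Gint; rw [Function.iterate_one, iter_two]
    have horb : y ∈ orbitP f g 0 := ⟨b :: t, by simp, hy⟩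
    by_cases hcase : y ≤ g (g 0)
    · -- y ∈ G₁, so n = 0
      have h0 : 0 ∈ {n : ℕ | invg^[n] y ∈ Gint g 1} := by
        simp only [Set.mem_setOf_eq, Function.iterate_zero_apply, hG1]
        exact ⟨hgy, hcase⟩
      rw [Nat.sInf_eq_zero.2 (Or.inl h0)]
      simpa using horb
    · push_neg at hcase
      by_cases hne : {n : ℕ | invg^[n] y ∈ Gint g 1}.Nonempty
      swap
      · rw [Set.not_nonempty_iff_eq_empty] at hne
        rw [hne, Nat.sInf_empty]
        simpa using horb
      -- y > g (g 0) > f 1 ≥ f z, so the word must start with g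
      have hb : b = false := by
        cases b
        · rfl
        · exfalso
          have : y = f (word f g t 0) := by rw [← hy]; simp [word]
          have hle : f (word f g t 0) ≤ f 1 := hA.f_mono.monotoneOn hzI mem1 hzI.2
          have : y ≤ f 1 := this ▸ hle
          exact absurd (this.trans_lt hSo.2) (lt_asymm hcase)
      subst hb
      have hyz : y = g (word f g t 0) := by rw [← hy]; simp [word]
      have ht : t ≠ [] := by
        intro h
        subst h
        simp only [word, id] at hyz
        exact absurd (hyz ▸ hcase) (lt_asymm (hA.g_mono mem0 hg0I hA.g0_pos))
      set z := word f g t 0 with hz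
      have hgz : g 0 ≤ z := by
        by_contra h
        push_neg at h
        have := hA.g_mono.monotoneOn hzI hg0I h.le
        rw [← hyz] at this
        exact absurd (hcase.trans_le this) (lt_irrefl _)
      have hinvy : invg y = z := by rw [hyz]; exact hA.invg_g hzI
      have hiter : ∀ n : ℕ, invg^[n + 1] y = invg^[n] z := by
        intro n; rw [Function.iterate_succ_apply, hinvy]
      have h0no : 0 ∉ {n : ℕ | invg^[n] y ∈ Gint g 1} := by
        simp only [Set.mem_setOf_eq, Function.iterate_zero_apply, hG1, Set.mem_Icc]
        intro h
        exact absurd h.2 (not_le.2 hcase)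
      -- S z is nonempty and sInf (S y) = sInf (S z) + 1
      obtain ⟨k, hk⟩ : ∃ k, sInf {n : ℕ | invg^[n] y ∈ Gint g 1} = k + 1 := by
        have hmem := Nat.sInf_mem hne
        cases' h : sInf {n : ℕ | invg^[n] y ∈ Gint g 1} with k
        · rw [h] at hmem; exact absurd hmem h0no
        · exact ⟨k, rfl⟩
      have hkz : k ∈ {n : ℕ | invg^[n] z ∈ Gint g 1} := by
        have hmem := Nat.sInf_mem hne
        rw [hk] at hmem
        simpa [Set.mem_setOf_eq, hiter k] using hmem
      have hnez : {n : ℕ | invg^[n] z ∈ Gint g 1}.Nonempty := ⟨k, hkz⟩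
      have hsinf : sInf {n : ℕ | invg^[n] y ∈ Gint g 1} =
          sInf {n : ℕ | invg^[n] z ∈ Gint g 1} + 1 := by
        apply le_antisymm
        · apply Nat.sInf_le
          have hmz := Nat.sInf_mem hnez
          simpa [Set.mem_setOf_eq, hiter] using hmz
        · rw [hk]
          exact Nat.succ_le_succ (Nat.sInf_le hkz)
      rw [hsinf, hiter]
      exact ih ht z rfl hgz

/-- Peeling lemma on the `f` side: symmetric statement for the orbit of `1`. -/
lemma peel_f (hA : MemA f g) (hSo : So f g) :
    ∀ w : List Bool, w ≠ [] → ∀ y : ℝ, word f g w 1 = y → y ≤ f 1 →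
      (Function.invFunOn f unitI)^[sInf {n : ℕ |
          (Function.invFunOn f unitI)^[n] y ∈ Fint f 1}] y ∈ orbitP f g 1 := by
  intro w
  induction w with
  | nil => intro h; exact absurd rfl h
  | cons b t ih =>
    intro _ y hy hfy
    set invf := Function.invFunOn f unitI with hinvf
    have hzI : word f g t 1 ∈ unitI := word_maps hA t 1 mem1
    have hyI : y ∈ unitI := by rw [← hy]; exact word_maps hA (b :: t) 1 mem1
    have hf1I : f 1 ∈ unitI := hA.f_maps mem1
    have hff1I : f (f 1) ∈ unitI := hA.f_maps hf1I
    have hF1 : Fint f 1 = Set.Icc (f (f 1)) (f 1) := by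
      unfold Fint; rw [Function.iterate_one, iter_two]
    have horb : y ∈ orbitP f g 1 := ⟨b :: t, by simp, hy⟩
    by_cases hcase : f (f 1) ≤ y
    · have h0 : 0 ∈ {n : ℕ | invf^[n] y ∈ Fint f 1} := by
        simp only [Set.mem_setOf_eq, Function.iterate_zero_apply, hF1]
        exact ⟨hcase, hfy⟩
      rw [Nat.sInf_eq_zero.2 (Or.inl h0)]
      simpa using horb
    · push_neg at hcase
      by_cases hne : {n : ℕ | invf^[n] y ∈ Fint f 1}.Nonempty
      swap
      · rw [Set.not_nonempty_iff_eq_empty] at hne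
        rw [hne, Nat.sInf_empty]
        simpa using horb
      -- y < f (f 1) < g 0 ≤ g z, so the word must start with f
      have hb : b = true := by
        cases b
        · exfalso
          have : y = g (word f g t 1) := by rw [← hy]; simp [word]
          have hle : g 0 ≤ g (word f g t 1) := hA.g_mono.monotoneOn mem0 hzI hzI.1
          have : g 0 ≤ y := this ▸ hle
          exact absurd ((hcase.trans_le' this).trans hSo.1) (lt_irrefl _)
        · rfl
      subst hb
      have hyz : y = f (word f g t 1) := by rw [← hy]; simp [word]
      have ht : t ≠ [] := by
        intro h
        subst h
        simp only [word, id] at hyz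
        have h2 : f (f 1) ≤ f 1 := hA.f_mono.monotoneOn hf1I mem1 hf1I.2
        rw [hyz] at hcase
        exact absurd hcase (not_lt.2 h2)
      set z := word f g t 1 with hz
      have hfz : z ≤ f 1 := by
        by_contra h
        push_neg at h
        have := hA.f_mono.monotoneOn hf1I hzI h.le
        rw [← hyz] at this
        exact absurd (this.trans_lt hcase) (lt_irrefl _)
      have hinvy : invf y = z := by rw [hyz]; exact hA.invf_f hzI
      have hiter : ∀ n : ℕ, invf^[n + 1] y = invf^[n] z := by
        intro n; rw [Function.iterate_succ_apply, hinvy]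
      have h0no : 0 ∉ {n : ℕ | invf^[n] y ∈ Fint f 1} := by
        simp only [Set.mem_setOf_eq, Function.iterate_zero_apply, hF1, Set.mem_Icc]
        intro h
        exact absurd h.1 (not_le.2 hcase)
      obtain ⟨k, hk⟩ : ∃ k, sInf {n : ℕ | invf^[n] y ∈ Fint f 1} = k + 1 := by
        have hmem := Nat.sInf_mem hne
        cases' h : sInf {n : ℕ | invf^[n] y ∈ Fint f 1} with k
        · rw [h] at hmem; exact absurd hmem h0no
        · exact ⟨k, rfl⟩
      have hkz : k ∈ {n : ℕ | invf^[n] z ∈ Fint f 1} := by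
        have hmem := Nat.sInf_mem hne
        rw [hk] at hmem
        simpa [Set.mem_setOf_eq, hiter k] using hmem
      have hnez : {n : ℕ | invf^[n] z ∈ Fint f 1}.Nonempty := ⟨k, hkz⟩
      have hsinf : sInf {n : ℕ | invf^[n] y ∈ Fint f 1} =
          sInf {n : ℕ | invf^[n] z ∈ Fint f 1} + 1 := by
        apply le_antisymm
        · apply Nat.sInf_le
          have hmz := Nat.sInf_mem hnez
          simpa [Set.mem_setOf_eq, hiter] using hmz
        · rw [hk]
          exact Nat.succ_le_succ (Nat.sInf_le hkz)
      rw [hsinf, hiter]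
      exact ih ht z rfl hfz

end Aux

/-- for `(f,g) ∈ 𝒜` with `So`: if `p ∈ F₁ \ W` lies in `O₊(0)`, then
`𝓕 p ∈ O₊(0)`; symmetrically, if `p ∈ G₁ \ W` lies in `O₊(1)`, then `𝓖 p ∈ O₊(1)`. -/
theorem induced_map_preserves_orbit (f g : ℝ → ℝ) (hA : MemA f g) (hSo : So f g) :
    (∀ p ∈ Fint f 1 \ ovW f g, p ∈ orbitP f g 0 → calF f g p ∈ orbitP f g 0) ∧
    (∀ p ∈ Gint g 1 \ ovW f g, p ∈ orbitP f g 1 → calG f g p ∈ orbitP f g 1) := by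
  have hg0I : g 0 ∈ unitI := hA.g_maps mem0
  have hf1I : f 1 ∈ unitI := hA.f_maps mem1
  constructor
  · intro p hp horb
    obtain ⟨⟨hp1, hp2⟩, hpW⟩ : (f^[2] 1 ≤ p ∧ p ≤ f^[1] 1) ∧ p ∉ ovW f g := hp
    rw [iter_two] at hp1
    rw [Function.iterate_one] at hp2
    have hplt : p < g 0 := by
      rcases not_and_or.1 (fun h : g 0 ≤ p ∧ p ≤ f 1 => hpW h) with h | h
      · exact not_le.1 h
      · exact absurd hp2 h
    obtain ⟨w, hw, hwp⟩ := horb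
    cases w with
    | nil => exact absurd rfl hw
    | cons b t =>
      have hzI : word f g t 0 ∈ unitI := word_maps hA t 0 mem0
      have hb : b = true := by
        cases b
        · exfalso
          have : p = g (word f g t 0) := by rw [← hwp]; simp [word]
          have hle : g 0 ≤ g (word f g t 0) := hA.g_mono.monotoneOn mem0 hzI hzI.1
          rw [← this] at hle
          exact absurd hplt (not_lt.2 hle)
        · rfl
      subst hb
      have hwp' : p = f (word f g t 0) := by rw [← hwp]; simp [word]
      have ht : t ≠ [] := by
        intro h
        subst h
        simp only [word, id] at hwp'
        rw [hA.f_zero] at hwp'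
        have : (0:ℝ) < f (f 1) := by
          have := hA.f_mono mem0 hf1I (hA.g0_pos.trans hA.g0_lt_f1)
          rwa [hA.f_zero] at this
        rw [hwp'] at hp1
        exact absurd (this.trans_le hp1) (lt_irrefl _)
      set z := word f g t 0 with hz
      have hzf1 : f 1 ≤ z := by
        by_contra h
        push_neg at h
        have := hA.f_mono hzI hf1I h
        rw [← hwp'] at this
        exact absurd (hp1.trans_lt this) (lt_irrefl _)
      have hinv : Function.invFunOn f unitI p = z := by
        rw [hwp']; exact hA.invf_f hzI
      unfold calF
      rw [hinv]
      exact peel_g hA hSo t ht z rfl ((hA.g0_lt_f1.trans_le hzf1).le)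
  · intro p hp horb
    obtain ⟨⟨hp1, hp2⟩, hpW⟩ : (g^[1] 0 ≤ p ∧ p ≤ g^[2] 0) ∧ p ∉ ovW f g := hp
    rw [iter_two] at hp2
    rw [Function.iterate_one] at hp1
    have hplt : f 1 < p := by
      rcases not_and_or.1 (fun h : g 0 ≤ p ∧ p ≤ f 1 => hpW h) with h | h
      · exact absurd hp1 h
      · exact not_le.1 h
    obtain ⟨w, hw, hwp⟩ := horb
    cases w with
    | nil => exact absurd rfl hw
    | cons b t =>
      have hzI : word f g t 1 ∈ unitI := word_maps hA t 1 mem1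
      have hb : b = false := by
        cases b
        · rfl
        · exfalso
          have : p = f (word f g t 1) := by rw [← hwp]; simp [word]
          have hle : f (word f g t 1) ≤ f 1 := hA.f_mono.monotoneOn hzI mem1 hzI.2
          rw [← this] at hle
          exact absurd hplt (not_lt.2 hle)
      subst hb
      have hwp' : p = g (word f g t 1) := by rw [← hwp]; simp [word]
      have ht : t ≠ [] := by
        intro h
        subst h
        simp only [word, id] at hwp'
        rw [hA.g_one] at hwp'
        have : g (g 0) < 1 := by
          have := hA.g_mono hg0I mem1 (hA.g0_lt_f1.trans hA.f1_lt_one)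
          rwa [hA.g_one] at this
        rw [hwp'] at hp2
        exact absurd (hp2.trans_lt this) (lt_irrefl _)
      set z := word f g t 1 with hz
      have hzg0 : z ≤ g 0 := by
        by_contra h
        push_neg at h
        have := hA.g_mono hg0I hzI h
        rw [← hwp'] at this
        exact absurd (this.trans_le hp2) (lt_irrefl _)
      have hinv : Function.invFunOn g unitI p = z := by
        rw [hwp']; exact hA.invg_g hzI
      unfold calG
      rw [hinv]
      exact peel_f hA hSo t ht z rfl (hzg0.trans hA.g0_lt_f1.le)

end IFSPaper
end
end

section
/- Fix ε∈(0,1/6) and λ∈(0,1/2), set I₋₁:=[0,1/3−ε], I₀:=[1/3+ε,2/3−ε], I₁:=[2/3+ε,1], and let (f,g) ∈ 𝒜 satisfy the inclusion property (f(I₋₁)⊆I₋₁, f(I₀)⊆int(I₋₁), f(I₁)⊆int(I₀), g(I₁)⊆I₁, g(I₀)⊆int(I₁), g(I₋₁)⊆int(I₀)) and the strong uniform contraction property (f′(x)<λ and g′(x)<λ for all x∈I₋₁∪I₀∪I₁). Then the unique minimal set K of ⟨f,g⟩₊ has Lebesgue measure zero; in particular K has empty interior. -/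
open Set Function MeasureTheory

noncomputable section

namespace IFSPaper

open Filter Topology
open scoped ENNReal

lemma derivPosAux (f : ℝ → ℝ) (hc : ContDiff ℝ 1 f)
    (hne : ∀ x ∈ Icc (0:ℝ) 1, deriv f x ≠ 0) (hlt : f 0 < f 1) :
    ∀ x ∈ Icc (0:ℝ) 1, 0 < deriv f x := by
  have hdc : Continuous (deriv f) := hc.continuous_deriv le_rfl
  obtain ⟨c, hc01, hcslope⟩ := exists_deriv_eq_slope f one_pos
    hc.continuous.continuousOn ((hc.differentiable one_ne_zero).differentiableOn)
  have hcpos : 0 < deriv f c := by rw [hcslope]; simpa using sub_pos.2 hlt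
  intro x hx
  by_contra h
  have hxneg : deriv f x < 0 := lt_of_le_of_ne (not_lt.1 h) (hne x hx)
  have h0 : (0:ℝ) ∈ uIcc (deriv f x) (deriv f c) :=
    mem_uIcc.2 (Or.inl ⟨hxneg.le, hcpos.le⟩)
  obtain ⟨y, hy, hy0⟩ := intermediate_value_uIcc hdc.continuousOn h0
  have hy01 : y ∈ Icc (0:ℝ) 1 :=
    uIcc_subset_Icc hx ⟨hc01.1.le, hc01.2.le⟩ hy
  exact hne y hy01 hy0

lemma exists_iter_small (f : ℝ → ℝ) (hcont : Continuous f)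
    (hmaps : MapsTo f (Icc (0:ℝ) 1) (Icc (0:ℝ) 1))
    (hle : ∀ x ∈ Icc (0:ℝ) 1, f x ≤ x)
    (hlt : ∀ x ∈ Ioo (0:ℝ) 1, f x < x) (hf1 : f 1 < 1)
    (δ : ℝ) (hδ : 0 < δ) (x : ℝ) (hx : x ∈ Icc (0:ℝ) 1) :
    ∃ n : ℕ, 1 ≤ n ∧ f^[n] x ∈ Icc (0:ℝ) δ := by
  set a : ℕ → ℝ := fun n => f^[n] x with ha
  have hmem : ∀ n, a n ∈ Icc (0:ℝ) 1 := by
    intro n; induction n with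
    | zero => simpa [ha] using hx
    | succ n ih =>
      have : a (n+1) = f (a n) := by simp [ha, Function.iterate_succ_apply']
      rw [this]; exact hmaps ih
  have hanti : Antitone a := antitone_nat_of_succ_le (fun n => by
    have : a (n+1) = f (a n) := by simp [ha, Function.iterate_succ_apply']
    rw [this]; exact hle _ (hmem n))
  have hbdd : BddBelow (range a) := ⟨0, by rintro _ ⟨n, rfl⟩; exact (hmem n).1⟩
  have htend : Tendsto a atTop (𝓝 (⨅ n, a n)) := tendsto_atTop_ciInf hanti hbdd
  set L := ⨅ n, a n with hL
  have hL0 : 0 ≤ L := le_ciInf fun n => (hmem n).1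
  have hL1 : L ≤ 1 := le_trans (ciInf_le hbdd 0) (hmem 0).2
  have hfL : f L = L := by
    have h1 : Tendsto (fun n => a (n+1)) atTop (𝓝 L) := htend.comp (tendsto_add_atTop_nat 1)
    have h2 : Tendsto (fun n => f (a n)) atTop (𝓝 (f L)) := (hcont.tendsto L).comp htend
    have heq : (fun n => f (a n)) = fun n => a (n+1) := by
      funext n; simp [ha, Function.iterate_succ_apply']
    rw [heq] at h2
    exact tendsto_nhds_unique h2 h1
  have hLeq : L = 0 := by
    rcases eq_or_lt_of_le hL0 with h0 | h0
    · exact h0.symm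
    rcases eq_or_lt_of_le hL1 with h1 | h1
    · exfalso; rw [h1] at hfL; exact hf1.ne hfL
    · exact absurd hfL (ne_of_lt (hlt L ⟨h0, h1⟩))
  have hev : ∀ᶠ n in atTop, a n < δ := by
    rw [hLeq] at htend
    exact htend.eventually_lt_const hδ
  obtain ⟨n, hn⟩ := hev.exists_forall_of_atTop
  refine ⟨max n 1, le_max_right _ _, (hmem _).1, ?_⟩
  exact le_of_lt (lt_of_le_of_lt (hanti (le_max_left n 1)) (hn n le_rfl))

lemma word_replicate_true (f g : ℝ → ℝ) (n : ℕ) (x : ℝ) :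
    word f g (List.replicate n true) x = f^[n] x := by
  induction n with
  | zero => rfl
  | succ n ih => simp [List.replicate_succ, word, ih, Function.iterate_succ_apply']

/-- appendix example: under the inclusion property and the strong uniform
contraction property, the minimal set `K` has Lebesgue measure zero; in particular it has
empty interior. -/
theorem appendix_minimal_set_measure_zero (ε lam : ℝ)
    (hε0 : 0 < ε) (hε : ε < 1/6) (hlam0 : 0 < lam) (hlam : lam < 1/2)
    (f g : ℝ → ℝ) (K : Set ℝ) (hA : MemA f g)
    (hinc : InclusionProp f g ε) (hcon : StrongContraction f g ε lam)
    (hK : IsMinimalSet f g K) :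
    volume K = 0 ∧ interior K = ∅ := by
  obtain ⟨hKne, hKI, hKmin⟩ := hK
  obtain ⟨x₀, hx₀⟩ := hKne
  have hKclosed : IsClosed K := (hKmin x₀ hx₀) ▸ isClosed_closure
  have f_cont : Continuous f := hA.f_c1.continuous
  have g_cont : Continuous g := hA.g_c1.continuous
  -- positive derivatives
  have hf01 : f 0 < f 1 := by rw [hA.f_zero]; exact hA.g0_pos.trans hA.g0_lt_f1
  have hg01 : g 0 < g 1 := by rw [hA.g_one]; exact hA.g0_lt_f1.trans hA.f1_lt_one
  have hfpos : ∀ x ∈ Icc (0:ℝ) 1, 0 < deriv f x :=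
    derivPosAux f hA.f_c1 hA.f_deriv_ne hf01
  have hgpos : ∀ x ∈ Icc (0:ℝ) 1, 0 < deriv g x :=
    derivPosAux g hA.g_c1 hA.g_deriv_ne hg01
  set Λ : Set ℝ := Im1 ε ∪ Iz ε ∪ Ip1 ε with hΛdef
  have hIm1I : Im1 ε ⊆ Icc (0:ℝ) 1 := Icc_subset_Icc le_rfl (by linarith)
  have hIzI : Iz ε ⊆ Icc (0:ℝ) 1 := Icc_subset_Icc (by linarith) (by linarith)
  have hIp1I : Ip1 ε ⊆ Icc (0:ℝ) 1 := Icc_subset_Icc (by linarith) le_rfl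
  have hΛI : Λ ⊆ Icc (0:ℝ) 1 := union_subset (union_subset hIm1I hIzI) hIp1I
  have hΛclosed : IsClosed Λ :=
    ((isClosed_Icc.union isClosed_Icc).union isClosed_Icc)
  -- Λ forward invariant
  have hΛf : MapsTo f Λ Λ := by
    rintro x ((hx | hx) | hx)
    · exact Or.inl (Or.inl (hinc.1 ⟨x, hx, rfl⟩))
    · exact Or.inl (Or.inl (interior_subset (hinc.2.1 ⟨x, hx, rfl⟩)))
    · exact Or.inl (Or.inr (interior_subset (hinc.2.2.1 ⟨x, hx, rfl⟩)))
  have hΛg : MapsTo g Λ Λ := by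
    rintro x ((hx | hx) | hx)
    · exact Or.inl (Or.inr (interior_subset (hinc.2.2.2.2.2 ⟨x, hx, rfl⟩)))
    · exact Or.inr (interior_subset (hinc.2.2.2.2.1 ⟨x, hx, rfl⟩))
    · exact Or.inr (hinc.2.2.2.1 ⟨x, hx, rfl⟩)
  have hword : ∀ (w : List Bool) (y : ℝ), y ∈ Λ → word f g w y ∈ Λ := by
    intro w
    induction w with
    | nil => intro y hy; exact hy
    | cons b t ih =>
      intro y hy
      have h1 : word f g t y ∈ Λ := ih y hy
      cases b
      · simpa [word] using hΛg h1
      · simpa [word] using hΛf h1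
  -- find a point of K in Λ
  have hfle : ∀ x ∈ Icc (0:ℝ) 1, f x ≤ x := by
    intro x hx
    rcases eq_or_lt_of_le hx.1 with h0 | h0
    · simp [← h0, hA.f_zero]
    rcases eq_or_lt_of_le hx.2 with h1 | h1
    · rw [h1]; exact hA.f1_lt_one.le
    · exact (hA.f_lt_id x ⟨h0, h1⟩).le
  obtain ⟨m, hm1, hmz⟩ := exists_iter_small f f_cont hA.f_maps hfle hA.f_lt_id
    hA.f1_lt_one (1/3 - ε) (by linarith) x₀ (hKI hx₀)
  set z : ℝ := f^[m] x₀ with hzdef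
  have hzΛ : z ∈ Λ := Or.inl (Or.inl hmz)
  have hzK : z ∈ K := by
    rw [← hKmin x₀ hx₀]
    refine subset_closure ⟨List.replicate m true, ?_, word_replicate_true f g m x₀⟩
    have : (List.replicate m true).length = m := List.length_replicate
    intro hnil; rw [hnil] at this; simp at this; omega
  have hKz : closure (orbitP f g z) = K := hKmin z hzK
  -- K ⊆ Λ
  have hKΛ : K ⊆ Λ := by
    rw [← hKz]
    refine closure_minimal ?_ hΛclosed
    rintro y ⟨w, hw, rfl⟩
    exact hword w z hzΛ
  -- K ⊆ f '' K ∪ g '' K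
  have hKcomp : IsCompact K := isCompact_Icc.of_isClosed_subset hKclosed hKI
  have hKsub : K ⊆ f '' K ∪ g '' K := by
    have horb : orbitP f g z ⊆ f '' K ∪ g '' K := by
      rintro y ⟨w, hw, rfl⟩
      cases w with
      | nil => exact absurd rfl hw
      | cons b t =>
        have htK : word f g t z ∈ K := by
          cases t with
          | nil => exact hzK
          | cons c u =>
            rw [← hKz]
            exact subset_closure ⟨c :: u, by simp, rfl⟩
        cases b
        · exact Or.inr ⟨word f g t z, htK, by simp [word]⟩
        · exact Or.inl ⟨word f g t z, htK, by simp [word]⟩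
    intro y hy
    rw [← hKz] at hy
    exact closure_minimal horb
      (((hKcomp.image f_cont).union (hKcomp.image g_cont)).isClosed) hy
  -- Lipschitz estimates
  have lipAux : ∀ (F : ℝ → ℝ), ContDiff ℝ 1 F → (∀ x ∈ Icc (0:ℝ) 1, 0 < deriv F x) →
      (∀ x ∈ Λ, deriv F x < lam) →
      ∀ s : Set ℝ, s ⊆ Λ → Convex ℝ s → LipschitzOnWith lam.toNNReal F s := by
    intro F hc hpos hbd s hsΛ hconv
    refine Convex.lipschitzOnWith_of_nnnorm_deriv_le
      (fun x _ => (hc.differentiable one_ne_zero).differentiableAt) (fun x hx => ?_) hconv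
    have hxI : x ∈ Icc (0:ℝ) 1 := hΛI (hsΛ hx)
    rw [← NNReal.coe_le_coe, coe_nnnorm, Real.norm_eq_abs, Real.coe_toNNReal _ hlam0.le,
      abs_of_pos (hpos x hxI)]
    exact (hbd x (hsΛ hx)).le
  have himg : ∀ (F : ℝ → ℝ) (s : Set ℝ), LipschitzOnWith lam.toNNReal F s →
      volume (F '' s) ≤ ENNReal.ofReal lam * volume s := by
    intro F s hl
    have h := hl.hausdorffMeasure_image_le (zero_le_one (α := ℝ))
    rw [MeasureTheory.hausdorffMeasure_real] at h
    simpa [ENNReal.ofReal] using h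
  have hlipf : ∀ s : Set ℝ, s ⊆ Λ → Convex ℝ s → LipschitzOnWith lam.toNNReal f s :=
    lipAux f hA.f_c1 hfpos (fun x hx => (hcon x hx).1)
  have hlipg : ∀ s : Set ℝ, s ⊆ Λ → Convex ℝ s → LipschitzOnWith lam.toNNReal g s :=
    lipAux g hA.g_c1 hgpos (fun x hx => (hcon x hx).2)
  -- decompose K
  set A := K ∩ Im1 ε with hA'
  set B := K ∩ Iz ε with hB'
  set C := K ∩ Ip1 ε with hC'
  have hABC : A ∪ B ∪ C = K := by
    rw [hA', hB', hC', ← inter_union_distrib_left, ← inter_union_distrib_left]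
    exact inter_eq_left.2 hKΛ
  have hAm : MeasurableSet A := hKclosed.measurableSet.inter measurableSet_Icc
  have hBm : MeasurableSet B := hKclosed.measurableSet.inter measurableSet_Icc
  have hCm : MeasurableSet C := hKclosed.measurableSet.inter measurableSet_Icc
  have hdAB : Disjoint A B := by
    refine Disjoint.mono inter_subset_right inter_subset_right ?_
    rw [Set.disjoint_left]
    rintro x hx1 hx2
    simp only [Im1, Iz, Set.mem_Icc] at hx1 hx2
    linarith [hx1.2, hx2.1]
  have hdAC : Disjoint A C := by
    refine Disjoint.mono inter_subset_right inter_subset_right ?_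
    rw [Set.disjoint_left]
    rintro x hx1 hx2
    simp only [Im1, Ip1, Set.mem_Icc] at hx1 hx2
    linarith [hx1.2, hx2.1]
  have hdBC : Disjoint B C := by
    refine Disjoint.mono inter_subset_right inter_subset_right ?_
    rw [Set.disjoint_left]
    rintro x hx1 hx2
    simp only [Iz, Ip1, Set.mem_Icc] at hx1 hx2
    linarith [hx1.2, hx2.1]
  have hS : volume A + volume B + volume C = volume K := by
    rw [← measure_union hdAB hBm, ← measure_union (hdAC.union_left hdBC) hCm, hABC]
  -- image bounds
  have hsubΛ : ∀ (s : Set ℝ) (h : s ⊆ Λ), True := fun _ _ => trivial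
  have hAΛ : Im1 ε ⊆ Λ := fun x hx => Or.inl (Or.inl hx)
  have hBΛ : Iz ε ⊆ Λ := fun x hx => Or.inl (Or.inr hx)
  have hCΛ : Ip1 ε ⊆ Λ := fun x hx => Or.inr hx
  have hconvIm1 : Convex ℝ (Im1 ε) := convex_Icc _ _
  have hconvIz : Convex ℝ (Iz ε) := convex_Icc _ _
  have hconvIp1 : Convex ℝ (Ip1 ε) := convex_Icc _ _
  have himage : ∀ F : ℝ → ℝ,
      (∀ s : Set ℝ, s ⊆ Λ → Convex ℝ s → LipschitzOnWith lam.toNNReal F s) →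
      volume (F '' K) ≤ ENNReal.ofReal lam * volume K := by
    intro F hlip
    have h1 : volume (F '' A) ≤ ENNReal.ofReal lam * volume A :=
      himg F A ((hlip (Im1 ε) hAΛ hconvIm1).mono inter_subset_right)
    have h2 : volume (F '' B) ≤ ENNReal.ofReal lam * volume B :=
      himg F B ((hlip (Iz ε) hBΛ hconvIz).mono inter_subset_right)
    have h3 : volume (F '' C) ≤ ENNReal.ofReal lam * volume C :=
      himg F C ((hlip (Ip1 ε) hCΛ hconvIp1).mono inter_subset_right)
    calc volume (F '' K) = volume (F '' (A ∪ B ∪ C)) := by rw [hABC]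
      _ = volume (F '' A ∪ F '' B ∪ F '' C) := by rw [image_union, image_union]
      _ ≤ volume (F '' A ∪ F '' B) + volume (F '' C) := measure_union_le _ _
      _ ≤ volume (F '' A) + volume (F '' B) + volume (F '' C) :=
          add_le_add (measure_union_le _ _) le_rfl
      _ ≤ ENNReal.ofReal lam * volume A + ENNReal.ofReal lam * volume B
            + ENNReal.ofReal lam * volume C := by
          exact add_le_add (add_le_add h1 h2) h3
      _ = ENNReal.ofReal lam * (volume A + volume B + volume C) := by ring
      _ = ENNReal.ofReal lam * volume K := by rw [hS]
  have hbound : volume K ≤ 2 * ENNReal.ofReal lam * volume K := by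
    calc volume K ≤ volume (f '' K ∪ g '' K) := measure_mono hKsub
      _ ≤ volume (f '' K) + volume (g '' K) := measure_union_le _ _
      _ ≤ ENNReal.ofReal lam * volume K + ENNReal.ofReal lam * volume K :=
          add_le_add (himage f hlipf) (himage g hlipg)
      _ = 2 * ENNReal.ofReal lam * volume K := by ring
  have hfin : volume K ≠ ⊤ := by
    have : volume K ≤ volume (Icc (0:ℝ) 1) := measure_mono hKI
    rw [Real.volume_Icc] at this
    exact ne_top_of_le_ne_top ENNReal.ofReal_ne_top this
  have hc1 : 2 * ENNReal.ofReal lam < 1 := by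
    have h2 : (2:ℝ≥0∞) * ENNReal.ofReal lam = ENNReal.ofReal (2 * lam) := by
      rw [ENNReal.ofReal_mul (by norm_num : (0:ℝ) ≤ 2)]
      norm_num
    rw [h2, ← ENNReal.ofReal_one]
    exact (ENNReal.ofReal_lt_ofReal_iff (by norm_num)).2 (by linarith)
  have hvol0 : volume K = 0 := by
    by_contra h
    have := calc volume K ≤ 2 * ENNReal.ofReal lam * volume K := hbound
      _ < 1 * volume K := by
        rw [mul_comm _ (volume K), mul_comm 1 (volume K)]; exact ENNReal.mul_lt_mul_right h hfin hc1
      _ = volume K := one_mul _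
    exact absurd this (lt_irrefl _)
  refine ⟨hvol0, ?_⟩
  by_contra h
  have hpos := MeasureTheory.Measure.measure_pos_of_nonempty_interior
    (volume : Measure ℝ) (nonempty_iff_ne_empty.2 h)
  rw [hvol0] at hpos
  exact lt_irrefl 0 hpos

end IFSPaper
end
end
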